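/- Let Ω ⊂ ℝ^d be a bounded set and let μ_1,…,μ_K ∈ Ω be centers with fill distance h = sup_{x∈Ω} min_{1≤k≤K} ‖x−μ_k‖ > 0 and separation radius q = (1/2) min_{i≠j} ‖μ_i−μ_j‖ satisfying h ≤ ρ q for a constant ρ ≥ 1. Let the weights satisfy 0 < w₋ ≤ w_k ≤ w₊ and let Σ_k be symmetric positive definite d×d matrices with c_Σ h² I ⪯ Σ_k ⪯ C_Σ h² I for constants 0 < c_Σ ≤ C_Σ. Then for every m ≥ 0 there exists a constant C_m, depending only on d, m, ρ, c_Σ, C_Σ, w₋, w₊ (and not on K, h, or the particular centers), such that sup_{x∈Ω} Σ_{k=1}^K ψ_k(x) ‖x−μ_k‖^m ≤ C_m h^m. -/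

import Mathlib

open MeasureTheory Matrix Metric

lemma dot_expand {n : ℕ} (A : Matrix (Fin n) (Fin n) ℝ) (u v : Fin n → ℝ) :
    u ⬝ᵥ A *ᵥ v = ∑ i, ∑ j, u i * A i j * v j := by
  simp [dotProduct, Matrix.mulVec, Finset.mul_sum, mul_assoc]

lemma dot_symm {n : ℕ} (A : Matrix (Fin n) (Fin n) ℝ) (hA : A.IsHermitian) (u v : Fin n → ℝ) :
    u ⬝ᵥ A *ᵥ v = v ⬝ᵥ A *ᵥ u := by
  rw [dot_expand, dot_expand, Finset.sum_comm]
  refine Finset.sum_congr rfl fun i _ => Finset.sum_congr rfl fun j _ => ?_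
  have h : A j i = A i j := by
    have := congrFun (congrFun hA.symm j) i
    simpa using this
  rw [h]; ring

lemma psd_cs {n : ℕ} (A : Matrix (Fin n) (Fin n) ℝ) (hA : A.PosSemidef) (y v : Fin n → ℝ) :
    (y ⬝ᵥ A *ᵥ v) ^ 2 ≤ (y ⬝ᵥ A *ᵥ y) * (v ⬝ᵥ A *ᵥ v) := by
  set a := y ⬝ᵥ A *ᵥ y with ha
  set b := y ⬝ᵥ A *ᵥ v with hb
  set c := v ⬝ᵥ A *ᵥ v with hc
  have key : ∀ t : ℝ, 0 ≤ a + 2*t*b + t^2*c := by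
    intro t
    have h0 := hA.dotProduct_mulVec_nonneg (y + t • v)
    rw [star_trivial] at h0
    have hexp : (y + t • v) ⬝ᵥ A *ᵥ (y + t • v) = a + 2*t*b + t^2*c := by
      rw [Matrix.mulVec_add, Matrix.mulVec_smul, dotProduct_add, add_dotProduct, add_dotProduct,
        dotProduct_smul, smul_dotProduct, smul_dotProduct, dotProduct_smul, smul_eq_mul,
        smul_eq_mul, smul_eq_mul, smul_eq_mul, dot_symm A hA.1 v y, ← hb, ← ha, ← hc]
      ring
    rwa [hexp] at h0
  have hc0 : 0 ≤ c := by rw [hc]; simpa using hA.dotProduct_mulVec_nonneg v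
  rcases eq_or_lt_of_le hc0 with hceq | hcpos
  · -- c = 0 : show b = 0
    have hb0 : b = 0 := by
      by_contra hbne
      have h1 := key (-(a+1)/(2*b))
      have h2 : a + 2*(-(a+1)/(2*b))*b + (-(a+1)/(2*b))^2*(0:ℝ) = -1 := by
        field_simp
        ring
      rw [← hceq] at h1
      rw [h2] at h1
      linarith
    have ha0 : 0 ≤ a := by simpa using key 0
    rw [hb0, ← hceq]
    nlinarith
  · have h1 := key (-(b/c))
    have h2 : a + 2*(-(b/c))*b + (-(b/c))^2*c = a - b^2/c := by
      field_simp; ring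
    rw [h2] at h1
    have := (div_le_iff₀ hcpos).mp (by linarith : b^2/c ≤ a)
    linarith

lemma dot_self_nonneg {n : ℕ} (v : Fin n → ℝ) : 0 ≤ v ⬝ᵥ v :=
  Finset.sum_nonneg fun i _ => mul_self_nonneg _

lemma quad_inv_le {n : ℕ} (A : Matrix (Fin n) (Fin n) ℝ) (hA : A.PosDef) {α : ℝ} (hα : 0 < α)
    (h1 : (A - α • 1).PosSemidef) (v : Fin n → ℝ) :
    v ⬝ᵥ A⁻¹ *ᵥ v ≤ (v ⬝ᵥ v) / α := by
  set y := A⁻¹ *ᵥ v with hy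
  have hAy : A *ᵥ y = v := by
    rw [hy, Matrix.mulVec_mulVec,
      Matrix.mul_nonsing_inv _ ((Matrix.isUnit_iff_isUnit_det _).mp hA.isUnit),
      Matrix.one_mulVec]
  have hsep := h1.dotProduct_mulVec_nonneg y
  rw [star_trivial] at hsep
  have hsub : (A - α • (1 : Matrix (Fin n) (Fin n) ℝ)) *ᵥ y = A *ᵥ y - α • y := by
    rw [Matrix.sub_mulVec, Matrix.smul_mulVec, Matrix.one_mulVec]
  rw [hsub, dotProduct_sub, dotProduct_smul, smul_eq_mul, hAy, sub_nonneg] at hsep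
  -- hsep : α * (y ⬝ᵥ y) ≤ y ⬝ᵥ v
  have hQ : v ⬝ᵥ A⁻¹ *ᵥ v = v ⬝ᵥ y := by rw [hy]
  have hcomm : y ⬝ᵥ v = v ⬝ᵥ y := dotProduct_comm _ _
  have hcs := psd_cs 1 Matrix.PosSemidef.one y v
  rw [Matrix.one_mulVec, Matrix.one_mulVec] at hcs
  -- hcs : (y ⬝ᵥ v)^2 ≤ (y ⬝ᵥ y) * (v ⬝ᵥ v)
  have hb2 : 0 ≤ y ⬝ᵥ y := dot_self_nonneg y
  have ha : 0 ≤ v ⬝ᵥ v := dot_self_nonneg v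
  rw [hQ, le_div_iff₀ hα]
  set Q := v ⬝ᵥ y
  rw [hcomm] at hsep
  rw [hcomm] at hcs
  have hQ0 : 0 ≤ Q := le_trans (by positivity) hsep
  rcases eq_or_lt_of_le hb2 with hb0 | hbpos
  · have hQsq : Q ^ 2 ≤ 0 := by nlinarith
    have : Q = 0 := by nlinarith [sq_nonneg Q]
    rw [this]; nlinarith
  · have h3 : (Q * α) * (y ⬝ᵥ y) ≤ (v ⬝ᵥ v) * (y ⬝ᵥ y) := by
      nlinarith [mul_le_mul_of_nonneg_left hsep hQ0]
    exact le_of_mul_le_mul_right h3 hbpos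

lemma quad_inv_ge {n : ℕ} (A : Matrix (Fin n) (Fin n) ℝ) (hA : A.PosDef) {β : ℝ} (hβ : 0 < β)
    (h2 : (β • 1 - A).PosSemidef) (v : Fin n → ℝ) :
    (v ⬝ᵥ v) / β ≤ v ⬝ᵥ A⁻¹ *ᵥ v := by
  set y := A⁻¹ *ᵥ v with hy
  have hAy : A *ᵥ y = v := by
    rw [hy, Matrix.mulVec_mulVec,
      Matrix.mul_nonsing_inv _ ((Matrix.isUnit_iff_isUnit_det _).mp hA.isUnit),
      Matrix.one_mulVec]
  have hup := h2.dotProduct_mulVec_nonneg v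
  rw [star_trivial] at hup
  have hsub : (β • (1 : Matrix (Fin n) (Fin n) ℝ) - A) *ᵥ v = β • v - A *ᵥ v := by
    rw [Matrix.sub_mulVec, Matrix.smul_mulVec, Matrix.one_mulVec]
  rw [hsub, dotProduct_sub, dotProduct_smul, smul_eq_mul, sub_nonneg] at hup
  -- hup : v ⬝ᵥ A *ᵥ v ≤ β * (v ⬝ᵥ v)
  have hQeq : v ⬝ᵥ A⁻¹ *ᵥ v = y ⬝ᵥ A *ᵥ y := by
    rw [hy]
    conv_rhs => rw [hAy]
    exact dotProduct_comm _ _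
  have hcs := psd_cs A hA.posSemidef y v
  have hyv : y ⬝ᵥ A *ᵥ v = v ⬝ᵥ v := by rw [dot_symm A hA.1 y v, hAy]
  rw [hyv] at hcs
  have hQ0 : 0 ≤ y ⬝ᵥ A *ᵥ y := by simpa using hA.posSemidef.dotProduct_mulVec_nonneg y
  have ha : 0 ≤ v ⬝ᵥ v := dot_self_nonneg v
  rw [hQeq, div_le_iff₀ hβ]
  rcases eq_or_lt_of_le ha with h0 | hpos
  · nlinarith
  · nlinarith [mul_le_mul_of_nonneg_left hup hQ0]

lemma exp_poly_bound {Cv m p : ℝ} (hC : 0 < Cv) (hm : 0 ≤ m) (hp : 0 ≤ p)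
    {s : ℝ} (hs : 0 ≤ s) :
    Real.exp (-s^2/(2*Cv)) * s ^ m ≤ Real.exp (Cv*(m+p)^2/2) * (1+s) ^ (-p) := by
  have h1s : (0:ℝ) < 1 + s := by linarith
  have hsm : s ^ m ≤ (1+s) ^ m := Real.rpow_le_rpow hs (by linarith) hm
  have hsplit : (1+s) ^ m = (1+s) ^ (m+p) * (1+s) ^ (-p) := by
    rw [← Real.rpow_add h1s]; ring_nf
  have hexp : (1+s) ^ (m+p) ≤ Real.exp ((m+p)*s) := by
    rw [Real.rpow_def_of_pos h1s]
    apply Real.exp_le_exp.mpr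
    have hlog : Real.log (1+s) ≤ s := by
      have := Real.log_le_sub_one_of_pos h1s
      linarith
    nlinarith [mul_le_mul_of_nonneg_right hlog (show (0:ℝ) ≤ m + p by linarith)]
  have hkey : Real.exp (-s^2/(2*Cv)) * Real.exp ((m+p)*s) ≤ Real.exp (Cv*(m+p)^2/2) := by
    rw [← Real.exp_add]
    apply Real.exp_le_exp.mpr
    rw [div_add' _ _ _ (by positivity), div_le_div_iff₀ (by positivity) (by norm_num)]
    nlinarith [sq_nonneg (s - Cv*(m+p))]
  calc Real.exp (-s^2/(2*Cv)) * s ^ m ≤ Real.exp (-s^2/(2*Cv)) * ((1+s)^(m+p) * (1+s)^(-p)) := by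
        rw [← hsplit]; exact mul_le_mul_of_nonneg_left hsm (Real.exp_pos _).le
    _ ≤ (Real.exp (-s^2/(2*Cv)) * Real.exp ((m+p)*s)) * (1+s)^(-p) := by
        rw [mul_assoc]
        refine mul_le_mul_of_nonneg_left (mul_le_mul_of_nonneg_right hexp ?_) (Real.exp_pos _).le
        positivity
    _ ≤ Real.exp (Cv*(m+p)^2/2) * (1+s)^(-p) := by
        refine mul_le_mul_of_nonneg_right hkey ?_
        positivity

lemma euclidean_zero_norm (v : EuclideanSpace ℝ (Fin 0)) : ‖v‖ = 0 := by
  simp [EuclideanSpace.norm_eq]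

lemma packing_sum (d : ℕ) :
    ∃ Cd : ℝ, 0 ≤ Cd ∧ ∀ (K : ℕ) (μ : Fin K → EuclideanSpace ℝ (Fin d)) (a h : ℝ),
      0 < a → a ≤ h →
      (∀ i j : Fin K, i ≠ j → 2 * a ≤ ‖μ i - μ j‖) →
      ∀ x : EuclideanSpace ℝ (Fin d),
        ∑ k, (1 + ‖x - μ k‖ / h) ^ (-((d:ℝ) + 2)) ≤ Cd * (h / a) ^ d := by
  rcases Nat.eq_zero_or_pos d with hd0 | hd
  · subst hd0
    refine ⟨1, one_pos.le, ?_⟩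
    intro K μ a h ha hah hsep x
    have hh : (0:ℝ) < h := lt_of_lt_of_le ha hah
    have hK1 : K ≤ 1 := by
      by_contra hK
      push_neg at hK
      have h01 : (⟨0, by omega⟩ : Fin K) ≠ ⟨1, by omega⟩ := by
        simp [Fin.ext_iff]
      have := hsep _ _ h01
      rw [euclidean_zero_norm] at this
      linarith
    have hterm : ∀ k : Fin K, (1 + ‖x - μ k‖ / h) ^ (-((0:ℕ):ℝ) - 2) ≤ 1 := by
      intro k
      apply Real.rpow_le_one_of_one_le_of_nonpos
      · have : 0 ≤ ‖x - μ k‖ / h := by positivity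
        linarith
      · norm_num
    match K, hK1 with
    | 0, _ => simp
    | 1, _ =>
      simp only [Fin.sum_univ_one, pow_zero, mul_one]
      have := hterm 0
      norm_num at this ⊢
      try exact this
      try { convert this using 2; ring }
  · -- main case d ≥ 1
    set E := EuclideanSpace ℝ (Fin d)
    have hnt : Nontrivial E := by
      apply Module.nontrivial_of_finrank_pos (R := ℝ)
      rw [finrank_euclideanSpace_fin]
      exact hd
    set p : ℝ := (d:ℝ) + 2 with hp
    set g₀ : E → ℝ := fun z => (1 + ‖z‖) ^ (-p) with hg₀
    have hg₀int : Integrable g₀ := by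
      apply integrable_one_add_norm
      rw [finrank_euclideanSpace_fin]
      norm_num [hp]
    set I₀ : ℝ := ∫ z : E, g₀ z with hI₀
    have hI₀nn : 0 ≤ I₀ := integral_nonneg fun z => by positivity
    set V1 := volume (Metric.ball (0:E) 1) with hV1
    have hV1top : V1 ≠ ⊤ := measure_ball_lt_top.ne
    have hV1pos : 0 < V1 := measure_ball_pos _ _ one_pos
    set V1r := V1.toReal with hV1r
    have hV1rpos : 0 < V1r := ENNReal.toReal_pos hV1pos.ne' hV1top
    refine ⟨(2:ℝ) ^ p * I₀ / V1r, by positivity, ?_⟩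
    intro K μ a h ha hah hsep x
    have hh : (0:ℝ) < h := lt_of_lt_of_le ha hah
    set f : E → ℝ := fun y => (1 + ‖y - x‖ / h) ^ (-p) with hf
    have hfeq : ∀ y, f y = g₀ (h⁻¹ • (y - x)) := by
      intro y
      simp only [hf, hg₀]
      rw [norm_smul]
      congr 2
      rw [Real.norm_eq_abs, abs_of_pos (inv_pos.mpr hh)]
      ring
    have hfint : Integrable f := by
      have h1 : Integrable (fun z => g₀ (h⁻¹ • z)) := hg₀int.comp_smul (inv_ne_zero hh.ne')
      have h2 : Integrable (fun y => g₀ (h⁻¹ • (y - x))) := h1.comp_sub_right x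
      exact h2.congr (Filter.EventuallyEq.of_eq (funext fun y => (hfeq y).symm))
    have hfnn : ∀ y, 0 ≤ f y := fun y => by
      show (0:ℝ) ≤ (1 + ‖y - x‖ / h) ^ (-p)
      positivity
    have hfcont : Continuous f := by
      have hbase : Continuous fun y : E => 1 + ‖y - x‖ / h := by fun_prop
      apply hbase.rpow_const
      intro y
      left
      have : 0 ≤ ‖y - x‖ / h := by positivity
      have hpos : (0:ℝ) < 1 + ‖y - x‖ / h := by linarith
      exact ne_of_gt hpos
    have hintf : ∫ y, f y = h ^ d * I₀ := by
      calc ∫ y, f y = ∫ y, g₀ (h⁻¹ • (y - x)) := by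
            exact integral_congr_ae (Filter.EventuallyEq.of_eq (funext hfeq))
        _ = ∫ y, g₀ (h⁻¹ • y) := integral_sub_right_eq_self (fun y => g₀ (h⁻¹ • y)) x
        _ = |h ^ Module.finrank ℝ E| • ∫ z, g₀ z :=
            MeasureTheory.Measure.integral_comp_inv_smul volume g₀ h
        _ = h ^ d * I₀ := by
            rw [finrank_euclideanSpace_fin, abs_of_pos (by positivity), smul_eq_mul]
    -- lintegral of f over the whole space
    have hlint : ∫⁻ y, ENNReal.ofReal (f y) = ENNReal.ofReal (h ^ d * I₀) := by
      rw [← hintf]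
      exact (ofReal_integral_eq_lintegral_ofReal hfint
        (Filter.Eventually.of_forall hfnn)).symm
    -- lower bound on each ball
    set c : Fin K → ℝ := fun k => (2:ℝ) ^ (-p) * (1 + ‖x - μ k‖ / h) ^ (-p) with hc
    have hcnn : ∀ k, 0 ≤ c k := fun k => by simp only [hc]; positivity
    have hball : ∀ k, ∀ y ∈ Metric.ball (μ k) a, c k ≤ f y := by
      intro k y hy
      have hdy : ‖y - μ k‖ < a := by
        rw [← dist_eq_norm]; exact Metric.mem_ball.mp hy
      have h1 : ‖y - x‖ ≤ ‖y - μ k‖ + ‖x - μ k‖ := by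
        calc ‖y - x‖ = ‖(y - μ k) - (x - μ k)‖ := by congr 1; abel
          _ ≤ ‖y - μ k‖ + ‖x - μ k‖ := norm_sub_le _ _
      have h2 : 1 + ‖y - x‖ / h ≤ 2 * (1 + ‖x - μ k‖ / h) := by
        have h4 : ‖y - x‖ / h ≤ 1 + ‖x - μ k‖ / h := by
          rw [div_le_iff₀ hh, add_mul, one_mul, div_mul_cancel₀ _ hh.ne']
          linarith
        have h5 : 0 ≤ ‖x - μ k‖ / h := by positivity
        linarith
      have hpos1 : (0:ℝ) < 1 + ‖y - x‖ / h := by positivity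
      calc c k = (2 * (1 + ‖x - μ k‖ / h)) ^ (-p) := by
            rw [hc, Real.mul_rpow (by norm_num) (by positivity)]
        _ ≤ (1 + ‖y - x‖ / h) ^ (-p) :=
            Real.rpow_le_rpow_of_nonpos hpos1 h2 (neg_nonpos.mpr (by positivity))
        _ = f y := rfl
    have hmeas : Measurable fun y => ENNReal.ofReal (f y) := hfcont.measurable.ennreal_ofReal
    have hballint : ∀ k : Fin K,
        ENNReal.ofReal (c k) * volume (Metric.ball (μ k) a) ≤
          ∫⁻ y in Metric.ball (μ k) a, ENNReal.ofReal (f y) := by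
      intro k
      rw [← MeasureTheory.setLIntegral_const]
      exact MeasureTheory.setLIntegral_mono hmeas
        fun y hy => ENNReal.ofReal_le_ofReal (hball k y hy)
    have hdisj : Pairwise (Function.onFun Disjoint fun k : Fin K => Metric.ball (μ k) a) := by
      intro i j hij
      apply Metric.ball_disjoint_ball
      rw [dist_eq_norm]
      have := hsep i j hij
      linarith
    have hmb : ∀ k : Fin K, MeasurableSet (Metric.ball (μ k) a) :=
      fun k => measurableSet_ball
    have hsum : ∑ k, ENNReal.ofReal (c k) * volume (Metric.ball (μ k) a) ≤
        ENNReal.ofReal (h ^ d * I₀) := by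
      calc ∑ k, ENNReal.ofReal (c k) * volume (Metric.ball (μ k) a)
          ≤ ∑ k, ∫⁻ y in Metric.ball (μ k) a, ENNReal.ofReal (f y) :=
            Finset.sum_le_sum fun k _ => hballint k
        _ = ∫⁻ y in ⋃ k, Metric.ball (μ k) a, ENNReal.ofReal (f y) := by
            rw [MeasureTheory.lintegral_iUnion hmb hdisj, tsum_fintype]
        _ ≤ ∫⁻ y, ENNReal.ofReal (f y) := MeasureTheory.setLIntegral_le_lintegral _ _
        _ = ENNReal.ofReal (h ^ d * I₀) := hlint
    have hballvol : ∀ k : Fin K,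
        volume (Metric.ball (μ k) a) = ENNReal.ofReal (a ^ d) * V1 := by
      intro k
      rw [MeasureTheory.Measure.addHaar_ball _ _ ha.le, finrank_euclideanSpace_fin]
    set L : ℝ := ∑ k, c k with hL
    have hLnn : 0 ≤ L := Finset.sum_nonneg fun k _ => hcnn k
    have hL1 : ENNReal.ofReal (L * a ^ d) * V1 ≤ ENNReal.ofReal (h ^ d * I₀) := by
      have heq : ENNReal.ofReal (L * a ^ d) * V1 =
          ∑ k, ENNReal.ofReal (c k) * volume (Metric.ball (μ k) a) := by
        calc ENNReal.ofReal (L * a ^ d) * V1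
            = (ENNReal.ofReal L * ENNReal.ofReal (a ^ d)) * V1 := by
              rw [ENNReal.ofReal_mul hLnn]
          _ = (∑ k, ENNReal.ofReal (c k)) * (ENNReal.ofReal (a ^ d) * V1) := by
              rw [hL, ENNReal.ofReal_sum_of_nonneg fun k _ => hcnn k, mul_assoc]
          _ = ∑ k, ENNReal.ofReal (c k) * (ENNReal.ofReal (a ^ d) * V1) := by
              rw [Finset.sum_mul]
          _ = ∑ k, ENNReal.ofReal (c k) * volume (Metric.ball (μ k) a) := by
              exact Finset.sum_congr rfl fun k _ => by rw [hballvol k]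
      rw [heq]
      exact hsum
    have hhdInn : 0 ≤ h ^ d * I₀ := mul_nonneg (by positivity) hI₀nn
    have hreal : L * a ^ d * V1r ≤ h ^ d * I₀ := by
      have htr := ENNReal.toReal_mono ENNReal.ofReal_ne_top hL1
      rwa [ENNReal.toReal_mul,
        ENNReal.toReal_ofReal (mul_nonneg hLnn (pow_nonneg ha.le d)),
        ENNReal.toReal_ofReal hhdInn] at htr
    have hLle : L ≤ (h ^ d * I₀) / (a ^ d * V1r) := by
      rw [le_div_iff₀ (by positivity)]
      calc L * (a ^ d * V1r) = L * a ^ d * V1r := by ring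
        _ ≤ h ^ d * I₀ := hreal
    have h2p : (2:ℝ) ^ p * (2:ℝ) ^ (-p) = 1 := by
      rw [← Real.rpow_add (by norm_num : (0:ℝ) < 2)]
      simp
    have hgoal_eq : ∑ k, (1 + ‖x - μ k‖ / h) ^ (-p) = (2:ℝ) ^ p * L := by
      rw [hL, Finset.mul_sum]
      refine Finset.sum_congr rfl fun k _ => ?_
      simp only [hc]
      rw [← mul_assoc, h2p, one_mul]
    rw [hgoal_eq]
    calc (2:ℝ) ^ p * L ≤ (2:ℝ) ^ p * ((h ^ d * I₀) / (a ^ d * V1r)) := by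
          apply mul_le_mul_of_nonneg_left hLle (by positivity)
      _ = (2:ℝ) ^ p * I₀ / V1r * (h / a) ^ d := by
          rw [div_pow]
          field_simp


/-- The anisotropic Gaussian basis function
`φₖ(x) = exp(−(1/2)(x−μₖ)ᵀ Σₖ⁻¹ (x−μₖ))`. -/
noncomputable def gaussBasis {d K : ℕ} (S : Fin K → Matrix (Fin d) (Fin d) ℝ)
    (μ : Fin K → EuclideanSpace ℝ (Fin d)) (k : Fin K)
    (x : EuclideanSpace ℝ (Fin d)) : ℝ :=
  Real.exp (-(1 / 2 : ℝ) * ∑ i, ∑ j, (x i - μ k i) * (S k)⁻¹ i j * (x j - μ k j))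

/-- The normalized Shepard weight `ψₖ(x) = wₖ φₖ(x) / ∑ⱼ wⱼ φⱼ(x)`. -/
noncomputable def shepardWeight {d K : ℕ} (S : Fin K → Matrix (Fin d) (Fin d) ℝ)
    (μ : Fin K → EuclideanSpace ℝ (Fin d)) (w : Fin K → ℝ) (k : Fin K)
    (x : EuclideanSpace ℝ (Fin d)) : ℝ :=
  w k * gaussBasis S μ k x / ∑ j, w j * gaussBasis S μ j x

/-- **moment localization.** For quasi-uniform centers, bounded weights and
covariances comparable to `h²I`, the normalized Shepard weights satisfy
`sup_{x∈Ω} ∑ₖ ψₖ(x) ‖x−μₖ‖ᵐ ≤ Cₘ hᵐ`, with `Cₘ` depending only on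
`d, m, ρ, c_Σ, C_Σ, w₋, w₊`. -/
theorem shepard_moment_localization
    (d : ℕ) (m ρ cSig CSig wlo whi : ℝ)
    (hm : 0 ≤ m) (hρ : 1 ≤ ρ) (hcSig : 0 < cSig) (hcC : cSig ≤ CSig)
    (hwlo : 0 < wlo) (hw : wlo ≤ whi) :
    ∃ C : ℝ, ∀ (Ω : Set (EuclideanSpace ℝ (Fin d))), Bornology.IsBounded Ω →
      ∀ (K : ℕ) (μ : Fin K → EuclideanSpace ℝ (Fin d)) (h q : ℝ),
      (∀ k, μ k ∈ Ω) →
      h = ⨆ x : Ω, ⨅ k, ‖(x : EuclideanSpace ℝ (Fin d)) - μ k‖ →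
      0 < h →
      q = (1 / 2) * ⨅ p : {p : Fin K × Fin K // p.1 ≠ p.2}, ‖μ p.val.1 - μ p.val.2‖ →
      h ≤ ρ * q →
      ∀ (w : Fin K → ℝ) (S : Fin K → Matrix (Fin d) (Fin d) ℝ),
        (∀ k, wlo ≤ w k ∧ w k ≤ whi) →
        (∀ k, (S k).PosDef) →
        (∀ k, (S k - (cSig * h ^ 2) • 1).PosSemidef ∧
              ((CSig * h ^ 2) • 1 - S k).PosSemidef) →
        ∀ x ∈ Ω, ∑ k, shepardWeight S μ w k x * ‖x - μ k‖ ^ m ≤ C * h ^ m := by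
  obtain ⟨Cd, hCd0, hCd⟩ := packing_sum d
  have hCSig : (0:ℝ) < CSig := lt_of_lt_of_le hcSig hcC
  set B : ℝ := Real.exp (CSig * (m + ((d:ℝ) + 2)) ^ 2 / 2) with hB
  set D0 : ℝ := wlo * Real.exp (-(1 / (2 * cSig))) with hD0
  have hD0pos : 0 < D0 := by positivity
  have hwhi : (0:ℝ) < whi := lt_of_lt_of_le hwlo hw
  refine ⟨whi / D0 * B * (Cd * ρ ^ d), ?_⟩
  intro Ω hΩ K μ h q hμΩ hh hhpos hq hhρ w S hwb hSpd hSbound x hx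
  have hρ0 : (0:ℝ) < ρ := lt_of_lt_of_le one_pos hρ
  have hqpos : 0 < q := by nlinarith
  set a : ℝ := h / ρ with ha
  have hapos : 0 < a := by positivity
  have haq : a ≤ q := by rw [ha, div_le_iff₀ hρ0]; nlinarith
  have hah : a ≤ h := by rw [ha, div_le_iff₀ hρ0]; nlinarith
  -- separation of centers
  have hsep : ∀ i j : Fin K, i ≠ j → 2 * a ≤ ‖μ i - μ j‖ := by
    intro i j hij
    have hbdd : BddBelow (Set.range fun pp : {p : Fin K × Fin K // p.1 ≠ p.2} =>
        ‖μ pp.val.1 - μ pp.val.2‖) := ⟨0, by rintro _ ⟨pp, rfl⟩; positivity⟩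
    have hle : (⨅ pp : {p : Fin K × Fin K // p.1 ≠ p.2}, ‖μ pp.val.1 - μ pp.val.2‖) ≤
        ‖μ i - μ j‖ := ciInf_le hbdd ⟨(i, j), hij⟩
    have h2q : 2 * q ≤ ‖μ i - μ j‖ := by rw [hq]; linarith
    linarith
  -- there is at least one center
  haveI hΩne : Nonempty Ω := ⟨⟨x, hx⟩⟩
  haveI hK : Nonempty (Fin K) := by
    by_contra hne
    rw [not_nonempty_iff] at hne
    have hzero : h = 0 := by
      rw [hh]
      have hz : ∀ y : Ω, (⨅ k : Fin K, ‖(y : EuclideanSpace ℝ (Fin d)) - μ k‖) = 0 :=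
        fun y => Real.iInf_of_isEmpty _
      simp only [hz]
      exact ciSup_const
    linarith
  -- nearest center
  obtain ⟨k0, hk0min⟩ := Finite.exists_min fun k : Fin K => ‖x - μ k‖
  have hnear : ‖x - μ k0‖ ≤ h := by
    obtain ⟨R, hR⟩ := (isBounded_iff_forall_norm_le).mp hΩ
    have hbddA : BddAbove (Set.range fun y : Ω =>
        ⨅ k : Fin K, ‖(y : EuclideanSpace ℝ (Fin d)) - μ k‖) := by
      refine ⟨R + ‖μ k0‖, ?_⟩
      rintro _ ⟨y, rfl⟩
      have h1 : (⨅ k : Fin K, ‖(y : EuclideanSpace ℝ (Fin d)) - μ k‖) ≤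
          ‖(y : EuclideanSpace ℝ (Fin d)) - μ k0‖ :=
        ciInf_le ⟨0, by rintro _ ⟨k, rfl⟩; positivity⟩ k0
      have h2 : ‖(y : EuclideanSpace ℝ (Fin d)) - μ k0‖ ≤ R + ‖μ k0‖ :=
        (norm_sub_le _ _).trans (by have := hR _ y.2; linarith)
      linarith
    have h1 : ‖x - μ k0‖ ≤ ⨅ k : Fin K, ‖x - μ k‖ := le_ciInf hk0min
    have h2 : (⨅ k : Fin K, ‖x - μ k‖) ≤ h := by
      rw [hh]
      exact le_ciSup hbddA (⟨x, hx⟩ : Ω)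
    linarith
  -- quadratic form bounds
  set nv : Fin K → (Fin d → ℝ) := fun k i => x i - μ k i with hnv
  have hnvsq : ∀ k, (nv k) ⬝ᵥ (nv k) = ‖x - μ k‖ ^ 2 := by
    intro k
    rw [EuclideanSpace.norm_eq, Real.sq_sqrt (Finset.sum_nonneg fun i _ => by positivity)]
    refine Finset.sum_congr rfl fun i _ => ?_
    have hsub : (x - μ k) i = x i - μ k i := rfl
    rw [hsub, Real.norm_eq_abs, sq_abs, sq]
  have hQup : ∀ k, (nv k) ⬝ᵥ (S k)⁻¹ *ᵥ (nv k) ≤ ‖x - μ k‖ ^ 2 / (cSig * h ^ 2) := by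
    intro k
    have := quad_inv_le (S k) (hSpd k) (by positivity : (0:ℝ) < cSig * h ^ 2)
      (hSbound k).1 (nv k)
    rwa [hnvsq k] at this
  have hQlo : ∀ k, ‖x - μ k‖ ^ 2 / (CSig * h ^ 2) ≤ (nv k) ⬝ᵥ (S k)⁻¹ *ᵥ (nv k) := by
    intro k
    have := quad_inv_ge (S k) (hSpd k) (by positivity : (0:ℝ) < CSig * h ^ 2)
      (hSbound k).2 (nv k)
    rwa [hnvsq k] at this
  have hgauss : ∀ k, gaussBasis S μ k x =
      Real.exp (-(1 / 2 : ℝ) * ((nv k) ⬝ᵥ (S k)⁻¹ *ᵥ (nv k))) := by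
    intro k
    rw [gaussBasis, dot_expand]
  have hφpos : ∀ k, 0 < gaussBasis S μ k x := fun k => Real.exp_pos _
  have hwpos : ∀ k, 0 < w k := fun k => lt_of_lt_of_le hwlo (hwb k).1
  -- denominator lower bound
  have hDge : D0 ≤ ∑ j, w j * gaussBasis S μ j x := by
    have hQk0 : (nv k0) ⬝ᵥ (S k0)⁻¹ *ᵥ (nv k0) ≤ 1 / cSig := by
      have h1 := hQup k0
      have h2 : ‖x - μ k0‖ ^ 2 / (cSig * h ^ 2) ≤ h ^ 2 / (cSig * h ^ 2) := by
        apply div_le_div_of_nonneg_right ?_ (by positivity)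
        · exact pow_le_pow_left₀ (norm_nonneg _) hnear 2
      have h3 : h ^ 2 / (cSig * h ^ 2) = 1 / cSig := by
        field_simp
      linarith
    have hφk0 : Real.exp (-(1 / (2 * cSig))) ≤ gaussBasis S μ k0 x := by
      rw [hgauss k0]
      apply Real.exp_le_exp.mpr
      have : -(1 / (2 * cSig)) = -(1 / 2 : ℝ) * (1 / cSig) := by ring
      rw [this]
      have hhalf : (0:ℝ) < (1/2:ℝ) := by norm_num
      nlinarith [hQk0]
    have hterm : D0 ≤ w k0 * gaussBasis S μ k0 x := by
      rw [hD0]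
      exact mul_le_mul (hwb k0).1 hφk0 (Real.exp_pos _).le (hwpos k0).le
    have hsingle : w k0 * gaussBasis S μ k0 x ≤ ∑ j, w j * gaussBasis S μ j x :=
      Finset.single_le_sum (fun j _ => (mul_pos (hwpos j) (hφpos j)).le) (Finset.mem_univ k0)
    linarith
  -- per-term bound
  have hterm : ∀ k, shepardWeight S μ w k x * ‖x - μ k‖ ^ m ≤
      whi / D0 * B * ((1 + ‖x - μ k‖ / h) ^ (-((d:ℝ) + 2))) * h ^ m := by
    intro k
    have hr0 : 0 ≤ ‖x - μ k‖ := norm_nonneg _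
    set t : ℝ := ‖x - μ k‖ / h with htdef
    have ht0 : 0 ≤ t := by positivity
    have hφle : gaussBasis S μ k x ≤ Real.exp (-t ^ 2 / (2 * CSig)) := by
      rw [hgauss k]
      apply Real.exp_le_exp.mpr
      have h1 := hQlo k
      have h2 : ‖x - μ k‖ ^ 2 / (CSig * h ^ 2) = t ^ 2 / CSig := by
        rw [htdef, div_pow, div_div, mul_comm CSig (h^2), ← div_div]
      rw [h2] at h1
      have h3 : -t ^ 2 / (2 * CSig) = -(1 / 2 : ℝ) * (t ^ 2 / CSig) := by ring
      rw [h3]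
      nlinarith [h1]
    have hrm : ‖x - μ k‖ ^ m = t ^ m * h ^ m := by
      rw [htdef, Real.div_rpow hr0 hhpos.le, div_mul_cancel₀]
      exact ne_of_gt (Real.rpow_pos_of_pos hhpos m)
    have hcore : Real.exp (-t ^ 2 / (2 * CSig)) * t ^ m ≤
        B * (1 + t) ^ (-((d:ℝ) + 2)) := by
      rw [hB]
      exact exp_poly_bound hCSig hm (by positivity) ht0
    have hφrm : gaussBasis S μ k x * ‖x - μ k‖ ^ m ≤
        B * (1 + t) ^ (-((d:ℝ) + 2)) * h ^ m := by
      calc gaussBasis S μ k x * ‖x - μ k‖ ^ m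
          = (gaussBasis S μ k x * t ^ m) * h ^ m := by rw [hrm]; ring
        _ ≤ (Real.exp (-t ^ 2 / (2 * CSig)) * t ^ m) * h ^ m := by
            apply mul_le_mul_of_nonneg_right
              (mul_le_mul_of_nonneg_right hφle (Real.rpow_nonneg ht0 m))
              (Real.rpow_nonneg hhpos.le m)
        _ ≤ B * (1 + t) ^ (-((d:ℝ) + 2)) * h ^ m :=
            mul_le_mul_of_nonneg_right hcore (Real.rpow_nonneg hhpos.le m)
    rw [shepardWeight, div_mul_eq_mul_div]
    have hgnn : 0 ≤ gaussBasis S μ k x * ‖x - μ k‖ ^ m :=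
      mul_nonneg (hφpos k).le (Real.rpow_nonneg hr0 m)
    calc w k * gaussBasis S μ k x * ‖x - μ k‖ ^ m / (∑ j, w j * gaussBasis S μ j x)
        ≤ whi * (gaussBasis S μ k x * ‖x - μ k‖ ^ m) / D0 := by
          apply div_le_div₀
            (mul_nonneg hwhi.le (mul_nonneg (hφpos k).le (Real.rpow_nonneg hr0 m))) ?_ hD0pos hDge
          · rw [← mul_assoc]
            exact mul_le_mul_of_nonneg_right
              (mul_le_mul_of_nonneg_right (hwb k).2 (hφpos k).le) (Real.rpow_nonneg hr0 m)
      _ ≤ whi * (B * (1 + t) ^ (-((d:ℝ) + 2)) * h ^ m) / D0 := by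
          apply div_le_div₀ ?_ (mul_le_mul_of_nonneg_left hφrm hwhi.le) hD0pos le_rfl
          · have h1 : (0:ℝ) ≤ (1 + t) ^ (-((d:ℝ) + 2)) := Real.rpow_nonneg (by linarith) _
            have h2 : (0:ℝ) ≤ h ^ m := Real.rpow_nonneg hhpos.le m
            have h3 : (0:ℝ) < B := Real.exp_pos _
            positivity
      _ = whi / D0 * B * ((1 + t) ^ (-((d:ℝ) + 2))) * h ^ m := by ring
  -- sum up
  have hpack := hCd K μ a h hapos hah hsep x
  have hha : h / a = ρ := by
    rw [ha]
    field_simp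
  rw [hha] at hpack
  calc ∑ k, shepardWeight S μ w k x * ‖x - μ k‖ ^ m
      ≤ ∑ k, whi / D0 * B * ((1 + ‖x - μ k‖ / h) ^ (-((d:ℝ) + 2))) * h ^ m :=
        Finset.sum_le_sum fun k _ => hterm k
    _ = (whi / D0 * B * h ^ m) * ∑ k, (1 + ‖x - μ k‖ / h) ^ (-((d:ℝ) + 2)) := by
        rw [Finset.mul_sum]
        exact Finset.sum_congr rfl fun k _ => by ring
    _ ≤ (whi / D0 * B * h ^ m) * (Cd * ρ ^ d) := by
        apply mul_le_mul_of_nonneg_left hpack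
        have hBpos : (0:ℝ) < B := Real.exp_pos _
        have := Real.rpow_nonneg hhpos.le m
        positivity
    _ = whi / D0 * B * (Cd * ρ ^ d) * h ^ m := by ring
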